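/- Let s, D, n be positive integers with s odd, s ≥ 3D, and Dn even, and let a_{i,k} (1 ≤ i ≤ s, 0 ≤ k ≤ n) be rational numbers such that R_n(t) = Σ_{i=1}^{s} Σ_{k=0}^{n} a_{i,k}/(t+k)^i for every real t ∉ {0, -1, …, -n}. Then for each j ∈ {1, …, D}, the series r_{n,j} = Σ_{m=1}^{∞} R_n(m + j/D) converges and equals ρ_{0,j} + Σ_{3 ≤ i ≤ s, i odd} ρ_i · ζ(i, j/D), where ρ_i = Σ_{k=0}^{n} a_{i,k} for odd i with 3 ≤ i ≤ s (independent of j), and ρ_{0,j} = -Σ_{k=0}^{n} Σ_{ℓ=0}^{k} Σ_{i=1}^{s} a_{i,k}/(ℓ + j/D)^i. -/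

import Mathlib

/-- The rational function `R_n(t)` of Fischler–Sprang–Zudilin (depending on `s` and `D`). -/
noncomputable def R (s D n : ℕ) (t : ℝ) : ℝ :=
  (D : ℝ) ^ (3 * D * n) * (n.factorial : ℝ) ^ (s + 1 - 3 * D) *
    (∏ j ∈ Finset.range (3 * D * n + 1), (t - n + (j : ℝ) / D)) /
    (∏ j ∈ Finset.range (n + 1), (t + j)) ^ (s + 1)

/-- The Hurwitz zeta value `ζ(i, α) = ∑_{m ≥ 0} 1/(m+α)^i`, as a real number. -/
noncomputable def hurwitzZetaVal (i : ℕ) (α : ℝ) : ℝ := ∑' m : ℕ, 1 / ((m : ℝ) + α) ^ i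


open Finset Filter Polynomial Topology in
lemma summable_hz {α : ℝ} (hα : 0 < α) {i : ℕ} (hi : 2 ≤ i) :
    Summable (fun l : ℕ => 1 / ((l : ℝ) + α) ^ i) := by
  rw [← summable_nat_add_iff 1]
  have hg : Summable (fun l : ℕ => 1 / ((l : ℝ) + 1) ^ 2) := by
    have h2 : Summable (fun l : ℕ => 1 / (l : ℝ) ^ 2) :=
      Real.summable_one_div_nat_pow.mpr one_lt_two
    refine ((summable_nat_add_iff 1).mpr h2).congr fun l => ?_
    push_cast; ring
  refine Summable.of_nonneg_of_le (fun l => by positivity) (fun l => ?_) hg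
  apply one_div_le_one_div_of_le (by positivity)
  push_cast
  calc ((l:ℝ)+1)^2 ≤ ((l:ℝ)+1)^i := pow_le_pow_right₀ (by linarith) hi
    _ ≤ ((l:ℝ)+1+α)^i := pow_le_pow_left₀ (by linarith) (by linarith) i
open Finset Filter Polynomial Topology in
lemma pf_unique (n : ℕ) : ∀ (S : ℕ) (b : ℕ → ℕ → ℝ),
    (∀ t : ℝ, (∀ k : ℕ, k ≤ n → t ≠ -(k : ℝ)) →
      ∑ i ∈ Icc 1 S, ∑ k ∈ range (n + 1), b i k / (t + k) ^ i = 0) →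
    ∀ i ∈ Icc 1 S, ∀ k ≤ n, b i k = 0 := by
  intro S
  induction S with
  | zero => intro b _ i hi; simp at hi
  | succ S IH =>
    intro b hb
    -- eventual avoidance of poles near -k0
    have hev : ∀ k0 : ℕ, k0 ≤ n → ∀ᶠ t in 𝓝[≠] (-(k0:ℝ)), ∀ k : ℕ, k ≤ n → t ≠ -(k:ℝ) := by
      intro k0 _
      have h1 : ∀ᶠ t : ℝ in 𝓝 (-(k0:ℝ)), |t - (-(k0:ℝ))| < 1/2 := by
        have := Metric.ball_mem_nhds (-(k0:ℝ)) (show (0:ℝ) < 1/2 by norm_num)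
        filter_upwards [this] with t ht
        simpa [Real.dist_eq] using ht
      filter_upwards [eventually_nhdsWithin_of_eventually_nhds h1,
        eventually_mem_nhdsWithin] with t ht htm k hk heq
      rcases eq_or_ne k k0 with rfl | hne
      · exact htm heq
      · rw [heq] at ht
        rw [abs_lt] at ht
        rcases hne.lt_or_gt with h | h
        · have : (k:ℝ) + 1 ≤ (k0:ℝ) := by exact_mod_cast h
          simp only [neg_sub_neg] at ht; push_cast at ht; linarith [ht.2]
        · have : (k0:ℝ) + 1 ≤ (k:ℝ) := by exact_mod_cast h
          simp only [neg_sub_neg] at ht; push_cast at ht; linarith [ht.1]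
    -- top coefficients vanish
    have htop : ∀ k0 : ℕ, k0 ≤ n → b (S+1) k0 = 0 := by
      intro k0 hk0
      set x : ℝ := -(k0:ℝ) with hx
      have hone : ∀ᶠ t in 𝓝[≠] x,
          (∑ i ∈ Icc 1 (S+1), ∑ k ∈ range (n+1), b i k * ((t + k0)^(S+1) / (t + k)^i)) = 0 := by
        filter_upwards [hev k0 hk0] with t ht
        have h0 := hb t ht
        have : ∑ i ∈ Icc 1 (S+1), ∑ k ∈ range (n+1), b i k * ((t + k0)^(S+1) / (t + k)^i)
            = (t + k0)^(S+1) * ∑ i ∈ Icc 1 (S+1), ∑ k ∈ range (n+1), b i k / (t + k) ^ i := by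
          rw [Finset.mul_sum]
          refine Finset.sum_congr rfl fun i _ => ?_
          rw [Finset.mul_sum]
          exact Finset.sum_congr rfl fun k _ => by ring
        rw [this, h0, mul_zero]
      have h2 : Tendsto (fun t : ℝ =>
          ∑ i ∈ Icc 1 (S+1), ∑ k ∈ range (n+1), b i k * ((t + k0)^(S+1) / (t + k)^i))
          (𝓝[≠] x) (𝓝 (b (S+1) k0)) := by
        have hval : (∑ i ∈ Icc 1 (S+1), ∑ k ∈ range (n+1),
            if i = S+1 ∧ k = k0 then b i k else 0) = b (S+1) k0 := by
          rw [Finset.sum_eq_single (S+1)]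
          · rw [Finset.sum_eq_single k0]
            · simp
            · intro k _ hk; simp [hk]
            · intro h; exact absurd (Finset.mem_range.mpr (by omega)) h
          · intro i _ hi; apply Finset.sum_eq_zero; intro k _; simp [hi]
          · intro h; exact absurd (Finset.mem_Icc.mpr (by omega)) h
        rw [← hval]
        apply tendsto_finset_sum
        intro i hi
        · 
          apply tendsto_finset_sum
          intro k hk
          rcases eq_or_ne k k0 with rfl | hne
          · -- k = k0
            rcases eq_or_ne i (S+1) with rfl | hiS
            · -- equals b i k eventually
              have : ∀ᶠ t in 𝓝[≠] x, b (S+1) k * ((t + k)^(S+1) / (t + k)^(S+1)) = b (S+1) k := by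
                filter_upwards [eventually_mem_nhdsWithin] with t ht
                have htk : t + (k:ℝ) ≠ 0 := by
                  intro h; apply ht; rw [Set.mem_singleton_iff]; linarith
                rw [div_self (pow_ne_zero _ htk), mul_one]
              rw [show (if (S+1 = S+1 ∧ k = k) then b (S+1) k else 0) = b (S+1) k by simp]
              exact Tendsto.congr' (this.mono fun t h => h.symm) tendsto_const_nhds
            · have hi' : i ≤ S+1 := (Finset.mem_Icc.mp hi).2
              have hilt : i < S + 1 := by omega
              have hee : ∀ᶠ t in 𝓝[≠] x,
                  b i k * (t + k)^(S+1-i) = b i k * ((t + k)^(S+1) / (t + k)^i) := by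
                filter_upwards [eventually_mem_nhdsWithin] with t ht
                have htk : t + (k:ℝ) ≠ 0 := by
                  intro h; apply ht; rw [Set.mem_singleton_iff]; linarith
                rw [pow_sub₀ _ htk hi']
                ring
              refine Tendsto.congr' hee ?_
              have hc : Tendsto (fun t : ℝ => b i k * (t + k)^(S+1-i)) (𝓝 x)
                  (𝓝 (b i k * (x + k)^(S+1-i))) := by
                apply Tendsto.const_mul
                exact (continuous_pow _).continuousAt.comp (by fun_prop)
              have hx0 : (x + (k:ℝ)) = 0 := by rw [hx]; ring
              have : (x + (k:ℝ))^(S+1-i) = 0 := by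
                rw [hx0]; exact zero_pow (by omega)
              rw [if_neg (by simp [hiS])]
              rw [this, mul_zero] at hc
              exact hc.mono_left nhdsWithin_le_nhds
          · -- k ≠ k0 : continuous, value 0
            have hxk : x + (k:ℝ) ≠ 0 := by
              rw [hx]
              intro h
              have : (k:ℝ) = (k0:ℝ) := by linarith
              exact hne (by exact_mod_cast this)
            have hc : Tendsto (fun t : ℝ => b i k * ((t + k0)^(S+1) / (t + k)^i)) (𝓝 x)
                (𝓝 (b i k * ((x + k0)^(S+1) / (x + k)^i))) := by
              apply Tendsto.const_mul
              apply Tendsto.div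
              · exact (continuous_pow _).continuousAt.comp (by fun_prop)
              · exact (continuous_pow _).continuousAt.comp (by fun_prop)
              · exact pow_ne_zero _ hxk
            have hx0 : (x + (k0:ℝ))^(S+1) = 0 := by
              rw [show x + (k0:ℝ) = 0 by rw [hx]; ring]; exact zero_pow (by omega)
            rw [if_neg (by simp [hne])]
            rw [hx0, zero_div, mul_zero] at hc
            exact hc.mono_left nhdsWithin_le_nhds
      have h1 : Tendsto (fun t : ℝ =>
          ∑ i ∈ Icc 1 (S+1), ∑ k ∈ range (n+1), b i k * ((t + k0)^(S+1) / (t + k)^i))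
          (𝓝[≠] x) (𝓝 0) := Tendsto.congr' (hone.mono fun t h => h.symm) tendsto_const_nhds
      exact tendsto_nhds_unique h2 h1
    -- reduce to S
    have hred : ∀ t : ℝ, (∀ k : ℕ, k ≤ n → t ≠ -(k : ℝ)) →
        ∑ i ∈ Icc 1 S, ∑ k ∈ range (n + 1), b i k / (t + k) ^ i = 0 := by
      intro t ht
      have h0 := hb t ht
      rw [Finset.sum_Icc_succ_top (by omega : 1 ≤ S + 1)] at h0
      have hz : ∑ k ∈ range (n + 1), b (S+1) k / (t + k) ^ (S+1) = 0 := by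
        apply Finset.sum_eq_zero
        intro k hk
        rw [htop k (by simpa [Nat.lt_succ] using Finset.mem_range.mp hk), zero_div]
      rw [hz, add_zero] at h0
      exact h0
    intro i hi k hk
    rcases Finset.mem_Icc.mp hi with ⟨hi1, hi2⟩
    rcases eq_or_ne i (S+1) with rfl | hne
    · exact htop k hk
    · exact IH b hred i (Finset.mem_Icc.mpr ⟨hi1, by omega⟩) k hk
open Finset Filter Polynomial Topology in
lemma tendsto_pow_mul_R (s D n e : ℕ) (hD : 0 < D)
    (hdeg : 3 * D * n + 1 + e < (n + 1) * (s + 1)) :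
    Tendsto (fun t : ℝ => t ^ e * R s D n t) atTop (𝓝 0) := by
  set c : ℝ := (D : ℝ) ^ (3 * D * n) * (n.factorial : ℝ) ^ (s + 1 - 3 * D) with hc
  set Np : ℝ[X] := ∏ j ∈ range (3 * D * n + 1), (X + C ((j : ℝ) / D - n)) with hNp
  set Qp : ℝ[X] := (∏ j ∈ range (n + 1), (X + C (j : ℝ))) ^ (s + 1) with hQp
  have hNm : Np.Monic := monic_prod_of_monic _ _ fun j _ => monic_X_add_C _
  have hQ1m : (∏ j ∈ range (n + 1), (X + C (j : ℝ))).Monic :=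
    monic_prod_of_monic _ _ fun j _ => monic_X_add_C _
  have hQm : Qp.Monic := hQ1m.pow _
  have hNdeg : Np.natDegree = 3 * D * n + 1 := by
    rw [hNp, natDegree_prod _ _ fun j _ => (monic_X_add_C _).ne_zero]
    simp only [natDegree_X_add_C]; simp
  have hQdeg : Qp.natDegree = (s + 1) * (n + 1) := by
    rw [hQp, natDegree_pow, natDegree_prod _ _ fun j _ => (monic_X_add_C _).ne_zero]
    simp only [natDegree_X_add_C]; simp
  have hkey : (C c * (X ^ e * Np)).degree < Qp.degree := by
    have h1 : (C c * (X ^ e * Np)).degree ≤ ((e + (3 * D * n + 1) : ℕ) : WithBot ℕ) := by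
      refine le_trans (degree_mul_le _ _) ?_
      have h2 : (X ^ e * Np : ℝ[X]).degree ≤ ((e + (3 * D * n + 1) : ℕ) : WithBot ℕ) := by
        refine le_trans (degree_mul_le _ _) ?_
        rw [degree_X_pow, degree_eq_natDegree hNm.ne_zero, hNdeg]
        exact_mod_cast le_rfl
      calc (C c).degree + (X ^ e * Np : ℝ[X]).degree
          ≤ 0 + ((e + (3 * D * n + 1) : ℕ) : WithBot ℕ) := add_le_add degree_C_le h2
        _ = _ := by rw [zero_add]
    refine lt_of_le_of_lt h1 ?_
    rw [degree_eq_natDegree hQm.ne_zero, hQdeg]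
    exact_mod_cast (by rw [Nat.mul_comm (s+1)]; omega : e + (3 * D * n + 1) < (s + 1) * (n + 1))
  have hfe : (fun t : ℝ => t ^ e * R s D n t)
      = fun t => (C c * (X ^ e * Np)).eval t / Qp.eval t := by
    funext t
    rw [hQp, hNp]
    simp only [R, eval_mul, eval_pow, eval_prod, eval_add, eval_X, eval_C, eval_sub]
    rw [show (∏ j ∈ range (3 * D * n + 1), (t + ((j : ℝ) / D - n)))
        = ∏ j ∈ range (3 * D * n + 1), (t - n + (j : ℝ) / D) from
      Finset.prod_congr rfl fun j _ => by ring]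
    ring
  rw [hfe]
  exact div_tendsto_zero_of_degree_lt _ _ hkey

open Finset Filter Polynomial Topology in
lemma R_neg (s D n : ℕ) (hs : Odd s) (hD : 0 < D) (hDn : Even (D * n)) (t : ℝ) :
    R s D n (-(n : ℝ) - t) = - R s D n t := by
  have hD0 : (D : ℝ) ≠ 0 := Nat.cast_ne_zero.mpr hD.ne'
  have hnum : (∏ j ∈ range (3 * D * n + 1), ((-(n:ℝ) - t) - n + (j : ℝ) / D))
      = - ∏ j ∈ range (3 * D * n + 1), (t - n + (j : ℝ) / D) := by
    rw [← Finset.prod_range_reflect]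
    have hcong : ∀ j ∈ range (3 * D * n + 1),
        ((-(n:ℝ) - t) - n + ((3 * D * n + 1 - 1 - j : ℕ) : ℝ) / D)
        = -(t - n + (j : ℝ) / D) := by
      intro j hj
      have hj' : j ≤ 3 * D * n := by
        have := Finset.mem_range.mp hj; omega
      have hcast : ((3 * D * n + 1 - 1 - j : ℕ) : ℝ) = 3 * D * n - j := by
        have : (3 * D * n + 1 - 1 - j : ℕ) = 3 * D * n - j := by omega
        rw [this, Nat.cast_sub hj']
        push_cast; ring
      rw [hcast]
      field_simp
      ring
    rw [Finset.prod_congr rfl hcong]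
    have : ∀ j ∈ range (3 * D * n + 1), -(t - n + (j : ℝ) / D) = (-1) * (t - n + (j : ℝ) / D) := by
      intro j _; ring
    rw [Finset.prod_congr rfl this, Finset.prod_mul_distrib, Finset.prod_const, card_range]
    have heven : Even (3 * D * n) := by
      have : 3 * D * n = 3 * (D * n) := by ring
      rw [this]; exact hDn.mul_left 3
    rw [pow_succ, heven.neg_one_pow]
    ring
  have hden : (∏ j ∈ range (n + 1), ((-(n:ℝ) - t) + (j:ℝ)))
      = (-1) ^ (n + 1) * ∏ j ∈ range (n + 1), (t + (j:ℝ)) := by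
    rw [← Finset.prod_range_reflect]
    have hcong : ∀ j ∈ range (n + 1),
        ((-(n:ℝ) - t) + ((n + 1 - 1 - j : ℕ) : ℝ)) = (-1) * (t + (j:ℝ)) := by
      intro j hj
      have hj' : j ≤ n := by have := Finset.mem_range.mp hj; omega
      have hcast : ((n + 1 - 1 - j : ℕ) : ℝ) = n - j := by
        have : (n + 1 - 1 - j : ℕ) = n - j := by omega
        rw [this, Nat.cast_sub hj']
      rw [hcast]; ring
    rw [Finset.prod_congr rfl hcong, Finset.prod_mul_distrib, Finset.prod_const, card_range]
  have heven2 : Even ((n + 1) * (s + 1)) := (hs.add_one).mul_left (n + 1)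
  simp only [R]
  rw [hnum, hden, mul_pow, ← pow_mul, heven2.neg_one_pow]
  ring

open Finset Filter Polynomial Topology in
lemma tendsto_t_div (k i : ℕ) (hi : 1 ≤ i) :
    Tendsto (fun t : ℝ => t / (t + (k : ℝ)) ^ i) atTop (𝓝 (if i = 1 then 1 else 0)) := by
  have hfe : (fun t : ℝ => t / (t + (k : ℝ)) ^ i)
      = fun t => (X : ℝ[X]).eval t / ((X + C (k:ℝ)) ^ i).eval t := by
    funext t; simp [eval_pow]
  rw [hfe]
  rcases eq_or_ne i 1 with rfl | hne
  · rw [if_pos rfl]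
    have hd : (X : ℝ[X]).degree = ((X + C (k:ℝ)) ^ 1).degree := by
      rw [pow_one, degree_X, degree_X_add_C]
    have := div_tendsto_leadingCoeff_div_of_degree_eq (X : ℝ[X]) ((X + C (k:ℝ)) ^ 1) hd
    have hlc : (X : ℝ[X]).leadingCoeff / ((X + C (k:ℝ)) ^ 1).leadingCoeff = 1 := by
      rw [leadingCoeff_X, ((monic_X_add_C (k:ℝ)).pow 1).leadingCoeff]; norm_num
    rwa [hlc] at this
  · rw [if_neg hne]
    apply div_tendsto_zero_of_degree_lt
    rw [degree_X, degree_pow, degree_X_add_C]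
    have h2 : 2 ≤ i := by omega
    calc (1 : WithBot ℕ) < (i : ℕ) := by exact_mod_cast h2
      _ = i • (1 : WithBot ℕ) := by simp

open Finset Filter Polynomial Topology in
lemma rho_one (s D n : ℕ) (hD : 0 < D) (hn : 0 < n) (hsD : 3 * D ≤ s) (a : ℕ → ℕ → ℚ)
    (ha : ∀ t : ℝ, (∀ k : ℕ, k ≤ n → t ≠ -(k : ℝ)) →
      R s D n t = ∑ i ∈ Finset.Icc 1 s, ∑ k ∈ Finset.range (n + 1), (a i k : ℝ) / (t + k) ^ i) :
    ∑ k ∈ range (n + 1), (a 1 k : ℝ) = 0 := by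
  have hs3 : 3 ≤ s := le_trans (by omega) hsD
  have hdeg : 3 * D * n + 1 + 1 < (n + 1) * (s + 1) := by nlinarith
  have h1 : Tendsto (fun t : ℝ => t * R s D n t) atTop (𝓝 0) := by
    have := tendsto_pow_mul_R s D n 1 hD hdeg
    simpa [pow_one] using this
  have h2 : Tendsto (fun t : ℝ => t * R s D n t) atTop
      (𝓝 (∑ i ∈ Icc 1 s, ∑ k ∈ range (n + 1), if i = 1 then (a i k : ℝ) else 0)) := by
    have heq : ∀ᶠ t : ℝ in atTop,
        (∑ i ∈ Icc 1 s, ∑ k ∈ range (n + 1), (a i k : ℝ) * (t / (t + k) ^ i))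
        = t * R s D n t := by
      filter_upwards [eventually_gt_atTop (0:ℝ)] with t ht
      rw [ha t (fun k _ => by
        intro h
        have : (0:ℝ) ≤ (k:ℝ) := Nat.cast_nonneg k
        rw [h] at ht; linarith)]
      rw [Finset.mul_sum]
      refine Finset.sum_congr rfl fun i _ => ?_
      rw [Finset.mul_sum]
      exact Finset.sum_congr rfl fun k _ => by ring
    refine Tendsto.congr' heq ?_
    apply tendsto_finset_sum
    intro i hi
    apply tendsto_finset_sum
    intro k _
    have hi1 : 1 ≤ i := (Finset.mem_Icc.mp hi).1
    have := (tendsto_t_div k i hi1).const_mul ((a i k : ℝ))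
    rcases eq_or_ne i 1 with rfl | hne
    · simpa using this
    · simpa [hne] using this
  have huniq := tendsto_nhds_unique h2 h1
  have hval : (∑ i ∈ Icc 1 s, ∑ k ∈ range (n + 1), if i = 1 then (a i k : ℝ) else 0)
      = ∑ k ∈ range (n + 1), (a 1 k : ℝ) := by
    rw [Finset.sum_eq_single 1]
    · simp
    · intro i _ hne; apply Finset.sum_eq_zero; intro k _; simp [hne]
    · intro h; exact absurd (Finset.mem_Icc.mpr (by omega)) h
  rw [hval] at huniq
  exact huniq

open Finset Filter Polynomial Topology in
lemma rho_even (s D n : ℕ) (hs : Odd s) (hD : 0 < D) (hDn : Even (D * n)) (a : ℕ → ℕ → ℚ)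
    (ha : ∀ t : ℝ, (∀ k : ℕ, k ≤ n → t ≠ -(k : ℝ)) →
      R s D n t = ∑ i ∈ Finset.Icc 1 s, ∑ k ∈ Finset.range (n + 1), (a i k : ℝ) / (t + k) ^ i) :
    ∀ i ∈ Icc 1 s, Even i → ∑ k ∈ range (n + 1), (a i k : ℝ) = 0 := by
  set b : ℕ → ℕ → ℝ := fun i k => (a i k : ℝ) + (-1 : ℝ) ^ i * (a i (n - k) : ℝ) with hbdef
  have hb0 : ∀ i ∈ Icc 1 s, ∀ k ≤ n, b i k = 0 := by
    apply pf_unique n s b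
    intro t ht
    have ht' : ∀ k : ℕ, k ≤ n → (-(n:ℝ) - t) ≠ -(k : ℝ) := by
      intro k hk heq
      apply ht (n - k) (Nat.sub_le n k)
      rw [Nat.cast_sub hk]
      linarith
    have h1 := ha t ht
    have h2 := ha _ ht'
    rw [R_neg s D n hs hD hDn t, h1] at h2
    -- h2 : -∑∑ a i k/(t+k)^i = ∑∑ a i k /((-n-t)+k)^i
    have h3 : (∑ i ∈ Icc 1 s, ∑ k ∈ range (n + 1), (a i k : ℝ) / ((-(n:ℝ) - t) + k) ^ i)
        = ∑ i ∈ Icc 1 s, ∑ k ∈ range (n + 1), (-1:ℝ)^i * (a i (n - k) : ℝ) / (t + k) ^ i := by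
      refine Finset.sum_congr rfl fun i _ => ?_
      rw [← Finset.sum_range_reflect (fun k => (-1:ℝ)^i * (a i (n - k) : ℝ) / (t + k) ^ i) (n+1)]
      refine Finset.sum_congr rfl fun k hk => ?_
      have hk' : k ≤ n := by have := Finset.mem_range.mp hk; omega
      have e1 : n + 1 - 1 - k = n - k := by omega
      have e2 : n - (n - k) = k := by omega
      rw [e1, e2]
      have e3 : (-(n:ℝ) - t) + (k:ℝ) = (-1) * (t + ((n - k : ℕ) : ℝ)) := by
        rw [Nat.cast_sub hk']; ring
      rw [e3, mul_pow]
      have hXne : (t + ((n - k : ℕ) : ℝ)) ≠ 0 := by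
        intro h0
        exact ht (n - k) (Nat.sub_le _ _) (by linarith)
      have hX : (t + ((n - k : ℕ) : ℝ)) ^ i ≠ 0 := pow_ne_zero _ hXne
      have hcc : ((-1:ℝ) ^ i) * ((-1:ℝ) ^ i) = 1 := by
        rw [← pow_add]
        exact Even.neg_one_pow ⟨i, rfl⟩
      have hinv : ((-1:ℝ) ^ i)⁻¹ = (-1:ℝ) ^ i := inv_eq_of_mul_eq_one_left hcc
      rw [div_mul_eq_div_div_swap, div_eq_mul_inv (↑(a i k) / (t + ((n - k : ℕ) : ℝ)) ^ i), hinv]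
      ring
    rw [h3] at h2
    rw [hbdef]
    simp only [add_div, Finset.sum_add_distrib]
    linarith
  intro i hi hieven
  have hrefl : ∑ k ∈ range (n + 1), (a i (n - k) : ℝ) = ∑ k ∈ range (n + 1), (a i k : ℝ) := by
    rw [← Finset.sum_range_reflect (fun k => (a i k : ℝ)) (n+1)]
    refine Finset.sum_congr rfl fun k hk => ?_
    have h4 : n + 1 - 1 - k = n - k := by omega
    rw [h4]
  have hsum : ∑ k ∈ range (n + 1), b i k = 0 := by
    apply Finset.sum_eq_zero
    intro k hk
    exact hb0 i hi k (by have := Finset.mem_range.mp hk; omega)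
  rw [hbdef] at hsum
  simp only [Finset.sum_add_distrib, ← Finset.mul_sum, hieven.neg_one_pow, one_mul] at hsum
  rw [hrefl] at hsum
  linarith


open Finset Filter Polynomial Topology in
theorem stmt2 (s D n : ℕ) (hs : Odd s) (hD : 0 < D) (hn : 0 < n) (hsD : 3 * D ≤ s)
    (hDn : Even (D * n)) (a : ℕ → ℕ → ℚ)
    (ha : ∀ t : ℝ, (∀ k : ℕ, k ≤ n → t ≠ -(k : ℝ)) →
      R s D n t = ∑ i ∈ Finset.Icc 1 s, ∑ k ∈ Finset.range (n + 1), (a i k : ℝ) / (t + k) ^ i)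
    (j : ℕ) (hj : 1 ≤ j) (hjD : j ≤ D) :
    Summable (fun m : ℕ => R s D n ((m : ℝ) + 1 + (j : ℝ) / D)) ∧
    ∑' m : ℕ, R s D n ((m : ℝ) + 1 + (j : ℝ) / D) =
      (-(∑ k ∈ Finset.range (n + 1), ∑ l ∈ Finset.range (k + 1), ∑ i ∈ Finset.Icc 1 s,
          (a i k : ℝ) / ((l : ℝ) + (j : ℝ) / D) ^ i)) +
      ∑ i ∈ (Finset.Icc 3 s).filter (fun i => Odd i),
        (∑ k ∈ Finset.range (n + 1), (a i k : ℝ)) * hurwitzZetaVal i ((j : ℝ) / D) := by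
  set α : ℝ := (j : ℝ) / D with hαdef
  have hα : 0 < α := by
    apply div_pos
    · exact_mod_cast Nat.lt_of_lt_of_le Nat.zero_lt_one hj
    · exact_mod_cast hD
  have hs3 : 3 ≤ s := le_trans (by omega) hsD
  have hpt : ∀ m : ℕ, R s D n ((m:ℝ) + 1 + α)
      = ∑ i ∈ Icc 1 s, ∑ k ∈ range (n+1), (a i k : ℝ) / (((m:ℝ) + 1 + α) + k) ^ i := by
    intro m
    apply ha
    intro k _
    have h1 : (0:ℝ) ≤ (k:ℝ) := Nat.cast_nonneg k
    have h2 : (0:ℝ) ≤ (m:ℝ) := Nat.cast_nonneg m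
    intro h
    linarith
  have hg2 : Summable (fun m : ℕ => 1/((m:ℝ)+1)^2) := by
    have h2 : Summable (fun l : ℕ => 1 / (l : ℝ) ^ 2) :=
      Real.summable_one_div_nat_pow.mpr one_lt_two
    refine ((summable_nat_add_iff 1).mpr h2).congr fun l => ?_
    push_cast; ring
  have hsummable : Summable (fun m : ℕ => R s D n ((m:ℝ) + 1 + α)) := by
    have hdeg : 3*D*n + 1 + 2 < (n+1)*(s+1) := by nlinarith
    have h0 := tendsto_pow_mul_R s D n 2 hD hdeg
    have hcomp : Tendsto (fun m : ℕ => ((m:ℝ) + 1 + α)) atTop atTop := by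
      have := tendsto_atTop_add_const_right atTop (1+α) tendsto_natCast_atTop_atTop
      exact this.congr fun m => by ring
    have h1 : Tendsto (fun m : ℕ => ((m:ℝ)+1+α)^2 * R s D n ((m:ℝ)+1+α)) atTop (𝓝 0) :=
      h0.comp hcomp
    have hb : ∀ᶠ m : ℕ in atTop, |((m:ℝ)+1+α)^2 * R s D n ((m:ℝ)+1+α)| < 1 := by
      have habs : Tendsto (fun m : ℕ => |((m:ℝ)+1+α)^2 * R s D n ((m:ℝ)+1+α)|) atTop (𝓝 |0|) :=
        h1.abs
      rw [abs_zero] at habs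
      exact habs.eventually_lt_const one_pos
    refine Summable.of_norm_bounded_eventually_nat (g := fun m => 1/((m:ℝ)+1)^2) hg2 ?_
    filter_upwards [hb] with m hm
    rw [Real.norm_eq_abs]
    have hp : (0:ℝ) < ((m:ℝ)+1+α)^2 := by positivity
    have heq : |R s D n ((m:ℝ)+1+α)| = |((m:ℝ)+1+α)^2 * R s D n ((m:ℝ)+1+α)| / ((m:ℝ)+1+α)^2 := by
      rw [abs_mul, abs_of_pos hp, mul_div_cancel_left₀ _ hp.ne']
    rw [heq]
    refine div_le_div₀ zero_le_one hm.le (by positivity) ?_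
    exact pow_le_pow_left₀ (by positivity) (by linarith) 2
  have hrho1 : ∑ k ∈ range (n+1), (a 1 k : ℝ) = 0 := rho_one s D n hD hn hsD a ha
  have hrhoe := rho_even s D n hs hD hDn a ha
  have hps : ∀ M : ℕ, ∑ m ∈ range M, R s D n ((m:ℝ)+1+α)
      = (∑ i ∈ Icc 1 s, ∑ k ∈ range (n+1), (a i k : ℝ) * (∑ l ∈ range ((k+1)+M), 1/((l:ℝ)+α)^i))
        - ∑ i ∈ Icc 1 s, ∑ k ∈ range (n+1), (a i k : ℝ) * (∑ l ∈ range (k+1), 1/((l:ℝ)+α)^i) := by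
    intro M
    calc ∑ m ∈ range M, R s D n ((m:ℝ)+1+α)
        = ∑ m ∈ range M, ∑ i ∈ Icc 1 s, ∑ k ∈ range (n+1), (a i k:ℝ)/(((m:ℝ)+1+α)+k)^i :=
          Finset.sum_congr rfl fun m _ => hpt m
      _ = ∑ i ∈ Icc 1 s, ∑ m ∈ range M, ∑ k ∈ range (n+1), (a i k:ℝ)/(((m:ℝ)+1+α)+k)^i :=
          Finset.sum_comm
      _ = ∑ i ∈ Icc 1 s, ∑ k ∈ range (n+1), ∑ m ∈ range M, (a i k:ℝ)/(((m:ℝ)+1+α)+k)^i :=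
          Finset.sum_congr rfl fun i _ => Finset.sum_comm
      _ = ∑ i ∈ Icc 1 s, ∑ k ∈ range (n+1), (a i k : ℝ) *
            ((∑ l ∈ range ((k+1)+M), 1/((l:ℝ)+α)^i) - ∑ l ∈ range (k+1), 1/((l:ℝ)+α)^i) := by
          refine Finset.sum_congr rfl fun i _ => Finset.sum_congr rfl fun k _ => ?_
          have hterm : ∀ m : ℕ, (a i k:ℝ)/(((m:ℝ)+1+α)+k)^i
              = (a i k:ℝ) * (1/((((k+1)+m : ℕ):ℝ)+α)^i) := by
            intro m
            rw [mul_one_div]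
            congr 2
            push_cast; ring
          rw [Finset.sum_congr rfl fun m _ => hterm m, ← Finset.mul_sum]
          congr 1
          have hadd := Finset.sum_range_add (fun l : ℕ => 1/((l:ℝ)+α)^i) (k+1) M
          rw [hadd]; ring
      _ = _ := by
          rw [← Finset.sum_sub_distrib]
          refine Finset.sum_congr rfl fun i _ => ?_
          rw [← Finset.sum_sub_distrib]
          exact Finset.sum_congr rfl fun k _ => mul_sub _ _ _
  have hA1 : Tendsto (fun M : ℕ => ∑ k ∈ range (n+1),
      (a 1 k : ℝ) * (∑ l ∈ range ((k+1)+M), 1/((l:ℝ)+α)^1)) atTop (𝓝 0) := by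
    have hinner : ∀ M : ℕ, ∑ k ∈ range (n+1), (a 1 k : ℝ) * (∑ l ∈ range ((k+1)+M), 1/((l:ℝ)+α)^1)
        = ∑ k ∈ range (n+1), (a 1 k : ℝ) * (∑ x ∈ range k, 1/((((1+M)+x:ℕ):ℝ)+α)^1) := by
      intro M
      calc ∑ k ∈ range (n+1), (a 1 k:ℝ) * (∑ l ∈ range ((k+1)+M), 1/((l:ℝ)+α)^1)
          = ∑ k ∈ range (n+1), ((a 1 k:ℝ) * (∑ x ∈ range k, 1/((((1+M)+x:ℕ):ℝ)+α)^1)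
              + (a 1 k:ℝ) * (∑ l ∈ range (1+M), 1/((l:ℝ)+α)^1)) := by
            refine Finset.sum_congr rfl fun k _ => ?_
            have h5 : (k+1)+M = (1+M)+k := by omega
            rw [h5, Finset.sum_range_add (fun l : ℕ => 1/((l:ℝ)+α)^1) (1+M) k]
            ring
        _ = _ := by
            rw [Finset.sum_add_distrib, ← Finset.sum_mul, hrho1, zero_mul, add_zero]
    have hx : ∀ x : ℕ, Tendsto (fun M : ℕ => 1/((((1+M)+x:ℕ):ℝ)+α)^1) atTop (𝓝 0) := by
      intro x
      have hat : Tendsto (fun M : ℕ => ((M:ℝ) + (1 + x + α))) atTop atTop :=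
        tendsto_atTop_add_const_right atTop _ tendsto_natCast_atTop_atTop
      have h7 := hat.inv_tendsto_atTop
      refine Tendsto.congr (fun M => ?_) h7
      rw [pow_one, one_div]
      congr 1
      push_cast; ring
    have hlim := tendsto_finset_sum (range (n+1)) (fun k (_ : k ∈ range (n+1)) =>
      Tendsto.const_mul ((a 1 k : ℝ)) (tendsto_finset_sum (range k) (fun x _ => hx x)))
    simp only [Finset.sum_const_zero, mul_zero] at hlim
    exact Tendsto.congr (fun M => (hinner M).symm) hlim
  have hA2 : Tendsto (fun M : ℕ => ∑ i ∈ Icc 2 s, ∑ k ∈ range (n+1),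
      (a i k : ℝ) * (∑ l ∈ range ((k+1)+M), 1/((l:ℝ)+α)^i)) atTop
      (𝓝 (∑ i ∈ Icc 2 s, ∑ k ∈ range (n+1), (a i k : ℝ) * hurwitzZetaVal i α)) := by
    apply tendsto_finset_sum
    intro i hi
    apply tendsto_finset_sum
    intro k _
    have hi2 : 2 ≤ i := (Finset.mem_Icc.mp hi).1
    have hhs : HasSum (fun l : ℕ => 1/((l:ℝ)+α)^i) (hurwitzZetaVal i α) :=
      (summable_hz hα hi2).hasSum
    have hG := hhs.tendsto_sum_nat
    have hcomp : Tendsto (fun M : ℕ => (k+1)+M) atTop atTop := by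
      have h8 := tendsto_add_atTop_nat (k+1)
      exact h8.congr fun M => by omega
    exact (hG.comp hcomp).const_mul _
  have hsplit : Finset.Icc 1 s = insert 1 (Finset.Icc 2 s) := by
    ext x; simp only [Finset.mem_Icc, Finset.mem_insert]; omega
  have h1notin : (1:ℕ) ∉ Finset.Icc 2 s := by simp
  have hA : Tendsto (fun M : ℕ => ∑ i ∈ Icc 1 s, ∑ k ∈ range (n+1),
      (a i k:ℝ) * (∑ l ∈ range ((k+1)+M), 1/((l:ℝ)+α)^i)) atTop
      (𝓝 (0 + ∑ i ∈ Icc 2 s, ∑ k ∈ range (n+1), (a i k : ℝ) * hurwitzZetaVal i α)) := by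
    have h9 := hA1.add hA2
    refine Tendsto.congr (fun M => ?_) h9
    rw [hsplit, Finset.sum_insert h1notin]
  have hAval : (0 + ∑ i ∈ Icc 2 s, ∑ k ∈ range (n+1), (a i k:ℝ) * hurwitzZetaVal i α)
      = ∑ i ∈ (Icc 3 s).filter (fun i => Odd i),
          (∑ k ∈ range (n+1), (a i k:ℝ)) * hurwitzZetaVal i α := by
    rw [zero_add]
    rw [Finset.sum_congr rfl (fun i (_ : i ∈ Icc 2 s) => (Finset.sum_mul (range (n+1))
      (fun k => (a i k:ℝ)) (hurwitzZetaVal i α)).symm)]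
    rw [← Finset.sum_filter_add_sum_filter_not (Icc 2 s) (fun i => Odd i)]
    have hz : ∑ i ∈ (Icc 2 s).filter (fun i => ¬ Odd i),
        (∑ k ∈ range (n+1), (a i k:ℝ)) * hurwitzZetaVal i α = 0 := by
      apply Finset.sum_eq_zero
      intro i hi
      rcases Finset.mem_filter.mp hi with ⟨hi2, hodd⟩
      have hie : Even i := Nat.not_odd_iff_even.mp hodd
      have hi1 : i ∈ Icc 1 s := by
        rcases Finset.mem_Icc.mp hi2 with ⟨h2, h3⟩
        exact Finset.mem_Icc.mpr ⟨by omega, h3⟩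
      rw [hrhoe i hi1 hie, zero_mul]
    rw [hz, add_zero]
    have hfe : (Icc 2 s).filter (fun i => Odd i) = (Icc 3 s).filter (fun i => Odd i) := by
      ext x
      simp only [Finset.mem_filter, Finset.mem_Icc, Nat.odd_iff]
      omega
    rw [hfe]
  set B : ℝ := ∑ i ∈ Icc 1 s, ∑ k ∈ range (n+1),
    (a i k:ℝ) * (∑ l ∈ range (k+1), 1/((l:ℝ)+α)^i) with hB
  have htot : Tendsto (fun M => ∑ m ∈ range M, R s D n ((m:ℝ)+1+α)) atTop
      (𝓝 ((∑ i ∈ (Icc 3 s).filter (fun i => Odd i),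
        (∑ k ∈ range (n+1), (a i k:ℝ)) * hurwitzZetaVal i α) - B)) := by
    have h6 := hA.sub_const B
    rw [hAval] at h6
    exact Tendsto.congr (fun M => (hps M).symm) h6
  have htsum := ((hsummable.hasSum_iff_tendsto_nat).mpr htot).tsum_eq
  refine ⟨hsummable, ?_⟩
  rw [htsum]
  have hBB : B = ∑ k ∈ range (n+1), ∑ l ∈ range (k+1), ∑ i ∈ Icc 1 s, (a i k:ℝ)/((l:ℝ)+α)^i := by
    rw [hB]
    calc ∑ i ∈ Icc 1 s, ∑ k ∈ range (n+1), (a i k:ℝ) * (∑ l ∈ range (k+1), 1/((l:ℝ)+α)^i)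
        = ∑ i ∈ Icc 1 s, ∑ k ∈ range (n+1), ∑ l ∈ range (k+1), (a i k:ℝ)/((l:ℝ)+α)^i := by
          refine Finset.sum_congr rfl fun i _ => Finset.sum_congr rfl fun k _ => ?_
          rw [Finset.mul_sum]
          exact Finset.sum_congr rfl fun l _ => mul_one_div _ _
      _ = ∑ k ∈ range (n+1), ∑ i ∈ Icc 1 s, ∑ l ∈ range (k+1), (a i k:ℝ)/((l:ℝ)+α)^i :=
          Finset.sum_comm
      _ = ∑ k ∈ range (n+1), ∑ l ∈ range (k+1), ∑ i ∈ Icc 1 s, (a i k:ℝ)/((l:ℝ)+α)^i :=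
          Finset.sum_congr rfl fun k _ => Finset.sum_comm
  rw [hBB]
  ring
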